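/- The formal power series M satisfies (1 − x³M)^{p−1} · (x²M − x² + 1) = 1. (Equivalently, x²M = (1 − x³M)^{-(p−1)} + x² − 1.) -/

import Mathlib

open PowerSeries

/-- Corollary 4.2: `M = M_1 ⋯ M_{p−1}` satisfies
`x²M = (1 − x³M)^{−(p−1)} + x² − 1`, stated without inverses as
`(1 − x³M)^{p−1} (x²M − x² + 1) = 1`. -/
theorem stmt8 (p : ℕ) (hp : 2 ≤ p) (M : ℕ → PowerSeries ℚ)
    (hM : ∀ i, 1 ≤ i → i ≤ p - 1 →
      M i - 1 = X * (∏ j ∈ Finset.Icc i (p - 1), M j) +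
        X ^ 3 * (∏ j ∈ Finset.Icc i (p - 1), M j) *
          ((∏ j ∈ Finset.Icc 1 i, M j) - 1)) :
    (1 - X ^ 3 * ∏ j ∈ Finset.Icc 1 (p - 1), M j) ^ (p - 1) *
      (X ^ 2 * (∏ j ∈ Finset.Icc 1 (p - 1), M j) - X ^ 2 + 1) = 1 := by
  set N := ∏ j ∈ Finset.Icc 1 (p - 1), M j with hN
  -- constant coefficients are 1, so N ≠ 0
  have hc : ∀ j, 1 ≤ j → j ≤ p - 1 → (constantCoeff : PowerSeries ℚ →+* ℚ) (M j) = 1 := by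
    intro j h1 h2
    have h := congrArg ((constantCoeff : PowerSeries ℚ →+* ℚ)) (hM j h1 h2)
    simp [map_sub, map_mul, map_pow, map_one, constantCoeff_X] at h
    linarith
  have hN0 : N ≠ 0 := by
    have h1 : (constantCoeff : PowerSeries ℚ →+* ℚ) N = 1 := by
      rw [hN, map_prod]
      exact Finset.prod_eq_one fun j hj =>
        hc j (Finset.mem_Icc.mp hj).1 (Finset.mem_Icc.mp hj).2
    intro h
    rw [h, map_zero] at h1
    exact zero_ne_one h1
  -- key relation
  have hK : ∀ i, 1 ≤ i → i ≤ p - 1 →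
      M i * (1 - X ^ 3 * N) = 1 + (X - X ^ 3) * ∏ j ∈ Finset.Icc i (p - 1), M j := by
    intro i h1 h2
    have hfull : (∏ j ∈ Finset.Icc i (p - 1), M j) * (∏ j ∈ Finset.Icc 1 i, M j)
        = N * M i := by
      have e1 : Finset.Icc i (p - 1) = Finset.Ico i p := by
        ext x; simp only [Finset.mem_Icc, Finset.mem_Ico]; omega
      have e2 : Finset.Icc 1 i = Finset.Ico 1 (i + 1) := by
        ext x; simp only [Finset.mem_Icc, Finset.mem_Ico]; omega
      have e3 : N = ∏ j ∈ Finset.Ico 1 p, M j := by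
        rw [hN]
        exact Finset.prod_congr (by ext x; simp only [Finset.mem_Icc, Finset.mem_Ico]; omega)
          (fun _ _ => rfl)
      rw [e1, e2, Finset.prod_Ico_succ_top (by omega : 1 ≤ i), e3,
        ← Finset.prod_Ico_consecutive M (by omega : 1 ≤ i) (by omega : i ≤ p)]
      ring
    linear_combination hM i h1 h2 + X ^ 3 * hfull
  -- main induction
  have hE : ∀ k i, 1 ≤ i → i + k = p - 1 →
      (∏ j ∈ Finset.Icc i (p - 1), M j) *
        (X ^ 2 * N * (1 - X ^ 3 * N) ^ (k + 1) +
          (1 - X ^ 2) * ((1 - X ^ 3 * N) ^ (k + 1) - 1)) = X ^ 2 * N := by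
    intro k
    induction k with
    | zero =>
      intro i h1 h2
      have hi : i = p - 1 := by omega
      subst hi
      have hs : Finset.Icc (p - 1) (p - 1) = {p - 1} := Finset.Icc_self _
      have hK' := hK (p - 1) h1 le_rfl
      rw [hs, Finset.prod_singleton] at hK' ⊢
      linear_combination (X ^ 2 * N) * hK'
    | succ k ih =>
      intro i h1 h2
      have hsplit : (∏ j ∈ Finset.Icc i (p - 1), M j)
          = M i * ∏ j ∈ Finset.Icc (i + 1) (p - 1), M j := by
        have e1 : Finset.Icc i (p - 1) = Finset.Ico i p := by
          ext x; simp only [Finset.mem_Icc, Finset.mem_Ico]; omega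
        have e2 : Finset.Icc (i + 1) (p - 1) = Finset.Ico (i + 1) p := by
          ext x; simp only [Finset.mem_Icc, Finset.mem_Ico]; omega
        rw [e1, e2, Finset.prod_eq_prod_Ico_succ_bot (by omega : i < p)]
      have hK' := hK i h1 (by omega)
      rw [hsplit] at hK' ⊢
      have ih' := ih (i + 1) (by omega) (by omega)
      linear_combination (M i * (1 - X ^ 3 * N)) * ih' + (X ^ 2 * N) * hK'
  have hE1 := hE (p - 2) 1 le_rfl (by omega)
  have hexp : p - 2 + 1 = p - 1 := by omega
  rw [hexp, ← hN] at hE1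
  exact mul_left_cancel₀ hN0
    (show N * ((1 - X ^ 3 * N) ^ (p - 1) * (X ^ 2 * N - X ^ 2 + 1)) = N * 1 by
      linear_combination hE1)
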